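/- The defining ideal 𝒬 = ker ψ of the Rees algebra of the edge ideal I(G) of a bipartite graph G is generated by binomials m_1 − m_2 in which both monomials m_1 and m_2 are squarefree and have degree at most 1 in the x-variables x_1,…,x_n and degree at most 1 in the y-variables y_1,…,y_m. -/

import Mathlib

open MvPolynomial

/-- The `k`-algebra map `ψ : S = k[x,y,T] → R[t]` presenting the Rees algebra of the
edge ideal of the bipartite graph whose edges are given by `edge : E → Fin n × Fin m`
(the edge indexed by `e` joins `x_{(edge e).1}` and `y_{(edge e).2}`).
Here the variables of `S` are indexed by `Sum (Sum (Fin n) (Fin m)) E` and the variables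
of `R[t]` by `Sum (Sum (Fin n) (Fin m)) Unit` (`Sum.inr ()` playing the role of `t`). -/
noncomputable def reesPsi (k : Type*) [CommSemiring k] (n m : ℕ) {E : Type*}
    (edge : E → Fin n × Fin m) :
    MvPolynomial (Sum (Sum (Fin n) (Fin m)) E) k →ₐ[k]
      MvPolynomial (Sum (Sum (Fin n) (Fin m)) Unit) k :=
  aeval fun s =>
    match s with
    | Sum.inl v => X (Sum.inl v)
    | Sum.inr e =>
        X (Sum.inl (Sum.inl (edge e).1)) * X (Sum.inl (Sum.inr (edge e).2)) * X (Sum.inr ())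




set_option linter.unusedSectionVars false

namespace ReesWalk

variable {EE XX YY : Type*} [DecidableEq XX] [DecidableEq YY] [DecidableEq EE]

/-- Total mass of a finitely supported multiset. -/
def sumN (c : EE →₀ ℕ) : ℕ := c.sum fun _ k => k

/-- Degree of a multiset of edges at a vertex. -/
def degA (ep : EE → XX) (c : EE →₀ ℕ) (x : XX) : ℕ :=
  c.sum fun e k => if ep e = x then k else 0

lemma sumN_add (c d : EE →₀ ℕ) : sumN (c + d) = sumN c + sumN d :=
  Finsupp.sum_add_index' (fun _ => rfl) (fun _ _ _ => rfl)

lemma apply_le_sumN (c : EE →₀ ℕ) (e : EE) : c e ≤ sumN c := by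
  classical
  by_cases h : c e = 0
  · simp [h]
  · have : e ∈ c.support := Finsupp.mem_support_iff.mpr h
    calc c e ≤ ∑ a ∈ c.support, c a := Finset.single_le_sum (fun _ _ => Nat.zero_le _) this
    _ = sumN c := rfl

lemma sumN_mono {c d : EE →₀ ℕ} (h : c ≤ d) : sumN c ≤ sumN d := by
  have : d = c + (d - c) := (add_tsub_cancel_of_le h).symm
  rw [this, sumN_add]; omega

lemma sumN_eq_zero {c : EE →₀ ℕ} (h : sumN c = 0) : c = 0 := by
  by_contra hc
  obtain ⟨e, he⟩ : ∃ e, c e ≠ 0 := by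
    by_contra h'
    push_neg at h'
    exact hc (Finsupp.ext fun e => h' e)
  have := apply_le_sumN c e
  omega

lemma degA_add (ep : EE → XX) (c d : EE →₀ ℕ) (x : XX) :
    degA ep (c + d) x = degA ep c x + degA ep d x := by
  classical
  exact Finsupp.sum_add_index' (fun _ => by simp) (fun a b₁ b₂ => by split <;> simp)

lemma degA_single (ep : EE → XX) (e : EE) (k : ℕ) (x : XX) :
    degA ep (Finsupp.single e k) x = if x = ep e then k else 0 := by
  classical
  rw [degA, Finsupp.sum_single_index (by simp)]
  by_cases h : ep e = x
  · simp [h]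
  · simp [h, Ne.symm h]

lemma degA_mono (ep : EE → XX) {c d : EE →₀ ℕ} (h : c ≤ d) (x : XX) :
    degA ep c x ≤ degA ep d x := by
  have : d = c + (d - c) := (add_tsub_cancel_of_le h).symm
  rw [this, degA_add]; omega

lemma apply_le_degA (ep : EE → XX) (c : EE →₀ ℕ) (e : EE) :
    c e ≤ degA ep c (ep e) := by
  have h : Finsupp.single e (c e) ≤ c := by
    intro a
    classical
    rcases eq_or_ne a e with rfl | hne
    · simp
    · simp [Finsupp.single_apply, Ne.symm hne]
  have := degA_mono ep h (ep e)
  rwa [degA_single, if_pos rfl] at this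

lemma exists_lt_of_degA_lt (ep : EE → XX) {c d : EE →₀ ℕ} {x : XX}
    (h : degA ep c x < degA ep d x) : ∃ e, ep e = x ∧ c e < d e := by
  classical
  by_contra hcon
  push_neg at hcon
  have hle : degA ep d x ≤ degA ep c x := by
    rw [degA, degA]
    rw [Finsupp.sum_of_support_subset d (Finset.subset_union_right (s₁ := c.support)) _
      (fun _ _ => by simp)]
    rw [Finsupp.sum_of_support_subset c (Finset.subset_union_left (s₂ := d.support)) _
      (fun _ _ => by simp)]
    apply Finset.sum_le_sum
    intro e _
    by_cases he : ep e = x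
    · simp only [he, if_pos rfl]
      exact hcon e he
    · simp [he]
  omega

lemma nonzero_of_balanced {epX : EE → XX} {c d : EE →₀ ℕ}
    (hb : ∀ x, degA epX c x = degA epX d x) (hc : c ≠ 0) : d ≠ 0 := by
  obtain ⟨e, he⟩ : ∃ e, c e ≠ 0 := by
    by_contra h
    push_neg at h
    exact hc (Finsupp.ext fun e => h e)
  have h1 : 0 < degA epX c (epX e) := lt_of_lt_of_le (Nat.pos_of_ne_zero he) (apply_le_degA _ _ _)
  intro h0
  rw [hb (epX e), h0] at h1
  simp [degA] at h1


section Twalk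

variable {epX : EE → XX} {epY : EE → YY}

/-- The alternating-trail search: starting from an edge `e0` of `γ`, walk alternating
between unused `δ`-edge instances and unused `γ`-edge instances until returning to the
`Y`-endpoint of `e0`.  Produces a balanced nonzero subpair using `e0` exactly once and
using no other `γ`-edge with the same `Y`-endpoint as `e0`. -/
lemma twalk_aux (γ δ : Finsupp EE ℕ)
    (hbX : ∀ x, degA epX γ x = degA epX δ x)
    (hbY : ∀ y, degA epY γ y = degA epY δ y)
    (e0 : EE) :
    ∀ (N : ℕ) (c d : Finsupp EE ℕ) (w : XX),
      sumN δ - sumN d ≤ N →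
      c ≤ γ → d ≤ δ → c ≠ 0 → c e0 = 1 →
      (∀ g, g ≠ e0 → epY g = epY e0 → c g = 0) →
      (∀ x, degA epX c x = degA epX d x + (if x = w then 1 else 0)) →
      (∀ y, degA epY c y = degA epY d y + (if y = epY e0 then 1 else 0)) →
      ∃ C D : Finsupp EE ℕ, C ≤ γ ∧ D ≤ δ ∧ C ≠ 0 ∧
        (∀ x, degA epX C x = degA epX D x) ∧
        (∀ y, degA epY C y = degA epY D y) ∧
        C e0 = 1 ∧ (∀ g, g ≠ e0 → epY g = epY e0 → C g = 0) := by
  intro N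
  induction N with
  | zero =>
    intro c d w hN hcγ hdδ hc0 hce0 hcj0 hIX hIY
    exfalso
    -- a fresh δ-edge instance at w exists, contradicting sumN δ ≤ sumN d
    have h1 : degA epX d w < degA epX δ w := by
      have h2 := hIX w
      rw [if_pos rfl] at h2
      have h3 : degA epX c w ≤ degA epX γ w := degA_mono epX hcγ w
      rw [hbX w] at h3
      omega
    obtain ⟨f, hfw, hflt⟩ := exists_lt_of_degA_lt epX h1
    have hlt : sumN d < sumN δ := by
      have hle : d + Finsupp.single f 1 ≤ δ := by
        intro a
        rcases eq_or_ne a f with rfl | hne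
        · simpa using hflt
        · simp only [Finsupp.add_apply, Finsupp.single_apply, if_neg (Ne.symm hne)]
          have := hdδ a
          omega
      have := sumN_mono hle
      rw [sumN_add] at this
      have hs : sumN (Finsupp.single f 1) = 1 := by
        simp [sumN, Finsupp.sum_single_index]
      omega
    omega
  | succ N ih =>
    intro c d w hN hcγ hdδ hc0 hce0 hcj0 hIX hIY
    -- find a fresh δ-edge instance at w
    have h1 : degA epX d w < degA epX δ w := by
      have h2 := hIX w
      rw [if_pos rfl] at h2
      have h3 : degA epX c w ≤ degA epX γ w := degA_mono epX hcγ w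
      rw [hbX w] at h3
      omega
    obtain ⟨f, hfw, hflt⟩ := exists_lt_of_degA_lt epX h1
    set d' := d + Finsupp.single f 1 with hd'def
    have hd'δ : d' ≤ δ := by
      intro a
      rcases eq_or_ne a f with rfl | hne
      · simpa [hd'def] using hflt
      · simp only [hd'def, Finsupp.add_apply, Finsupp.single_apply, if_neg (Ne.symm hne)]
        have := hdδ a
        omega
    have hsum' : sumN d' = sumN d + 1 := by
      rw [hd'def, sumN_add]
      simp [sumN, Finsupp.sum_single_index]
    have hdX' : ∀ x, degA epX d' x = degA epX d x + (if x = w then 1 else 0) := by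
      intro x
      rw [hd'def, degA_add, degA_single, hfw]
    have hdY' : ∀ y, degA epY d' y = degA epY d y + (if y = epY f then 1 else 0) := by
      intro y
      rw [hd'def, degA_add, degA_single]
    by_cases hclose : epY f = epY e0
    · -- close the trail
      refine ⟨c, d', hcγ, hd'δ, hc0, ?_, ?_, hce0, hcj0⟩
      · intro x
        rw [hIX x, hdX' x]
      · intro y
        rw [hIY y, hdY' y, hclose]
    · -- continue: find a fresh γ-edge at the Y-endpoint of f
      have h4 : degA epY c (epY f) < degA epY γ (epY f) := by
        have h5 := hIY (epY f)
        rw [if_neg hclose] at h5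
        have h6 : degA epY d' (epY f) ≤ degA epY δ (epY f) := degA_mono epY hd'δ (epY f)
        rw [hdY' (epY f), if_pos rfl] at h6
        rw [hbY]
        omega
      obtain ⟨g, hgy, hglt⟩ := exists_lt_of_degA_lt epY h4
      have hge0 : g ≠ e0 := by
        intro h
        rw [h] at hgy
        exact hclose hgy.symm
      set c' := c + Finsupp.single g 1 with hc'def
      have hc'γ : c' ≤ γ := by
        intro a
        rcases eq_or_ne a g with rfl | hne
        · simpa [hc'def] using hglt
        · simp only [hc'def, Finsupp.add_apply, Finsupp.single_apply, if_neg (Ne.symm hne)]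
          have := hcγ a
          omega
      have hcX' : ∀ x, degA epX c' x = degA epX c x + (if x = epX g then 1 else 0) := by
        intro x
        rw [hc'def, degA_add, degA_single]
      have hcY' : ∀ y, degA epY c' y = degA epY c y + (if y = epY f then 1 else 0) := by
        intro y
        rw [hc'def, degA_add, degA_single, hgy]
      refine ih c' d' (epX g) ?_ hc'γ hd'δ ?_ ?_ ?_ ?_ ?_
      · omega
      · intro h0
        have : c' e0 = 0 := by rw [h0]; rfl
        rw [hc'def] at this
        simp only [Finsupp.add_apply, Finsupp.single_apply, if_neg hge0] at this
        omega
      · rw [hc'def]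
        simp only [Finsupp.add_apply, Finsupp.single_apply, if_neg hge0]
        omega
      · intro h hhe0 hhy
        rw [hc'def]
        have hg : h ≠ g := by
          intro hh
          rw [hh] at hhy
          exact hclose (hgy.symm.trans hhy)
        simp only [Finsupp.add_apply, Finsupp.single_apply, if_neg (Ne.symm hg)]
        rw [hcj0 h hhe0 hhy]
        omega
      · intro x
        rw [hcX' x, hIX x, hdX' x]
      · intro y
        rw [hcY' y, hIY y, hdY' y]
        split_ifs <;> omega

/-- Main trail lemma. -/
lemma twalk (γ δ : Finsupp EE ℕ)
    (hbX : ∀ x, degA epX γ x = degA epX δ x)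
    (hbY : ∀ y, degA epY γ y = degA epY δ y)
    (e0 : EE) (he0 : γ e0 ≠ 0) :
    ∃ C D : Finsupp EE ℕ, C ≤ γ ∧ D ≤ δ ∧ C ≠ 0 ∧
      (∀ x, degA epX C x = degA epX D x) ∧
      (∀ y, degA epY C y = degA epY D y) ∧
      C e0 = 1 ∧ (∀ g, g ≠ e0 → epY g = epY e0 → C g = 0) := by
  apply twalk_aux γ δ hbX hbY e0 (sumN δ) (Finsupp.single e0 1) 0 (epX e0)
  · simp [sumN]
  · intro a
    rcases eq_or_ne a e0 with rfl | hne
    · simpa using Nat.one_le_iff_ne_zero.mpr he0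
    · simp [Finsupp.single_apply, Ne.symm hne]
  · exact zero_le
  · intro h
    have : (Finsupp.single e0 1) e0 = 0 := by rw [h]; rfl
    simp at this
  · simp
  · intro g hg _
    simp [Finsupp.single_apply, Ne.symm hg]
  · intro x
    rw [degA_single]
    simp [degA]
  · intro y
    rw [degA_single]
    simp [degA]

end Twalk


lemma sumN_lt_of_ne {c γ : Finsupp EE ℕ} (h : c ≤ γ) (hne : c ≠ γ) : sumN c < sumN γ := by
  have heq : γ = c + (γ - c) := (add_tsub_cancel_of_le h).symm
  have hne0 : γ - c ≠ 0 := by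
    intro h0
    rw [h0, add_zero] at heq
    exact hne heq.symm
  have : sumN (γ - c) ≠ 0 := fun h0 => hne0 (sumN_eq_zero h0)
  rw [heq, sumN_add]
  omega

lemma two_of_degA (ep : EE → XX) (γ : Finsupp EE ℕ) (x : XX) (h : 2 ≤ degA ep γ x) :
    (∃ e, ep e = x ∧ 2 ≤ γ e) ∨
    (∃ e e', e ≠ e' ∧ ep e = x ∧ ep e' = x ∧ γ e ≠ 0 ∧ γ e' ≠ 0) := by
  classical
  by_cases hl : ∃ e, ep e = x ∧ 2 ≤ γ e
  · exact Or.inl hl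
  · push_neg at hl
    right
    set s := γ.support.filter (fun e => ep e = x) with hs
    have hdeg : degA ep γ x = ∑ e ∈ s, γ e := by
      rw [degA, Finsupp.sum, hs, Finset.sum_filter]
    have hcard : 2 ≤ s.card := by
      by_contra hc
      push_neg at hc
      interval_cases hcc : s.card
      · rw [Finset.card_eq_zero.mp hcc] at hdeg
        simp at hdeg
        omega
      · obtain ⟨a, ha⟩ := Finset.card_eq_one.mp hcc
        rw [ha] at hdeg
        simp only [Finset.sum_singleton] at hdeg
        have hax : ep a = x := by
          have : a ∈ s := by rw [ha]; exact Finset.mem_singleton_self a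
          exact (Finset.mem_filter.mp this).2
        have := hl a hax
        omega
    obtain ⟨a, ha, b, hb, hab⟩ := Finset.one_lt_card.mp hcard
    refine ⟨a, b, hab, (Finset.mem_filter.mp ha).2, (Finset.mem_filter.mp hb).2, ?_, ?_⟩
    · exact Finsupp.mem_support_iff.mp (Finset.mem_filter.mp ha).1
    · exact Finsupp.mem_support_iff.mp (Finset.mem_filter.mp hb).1

section Core

variable (epX : EE → XX) (epY : EE → YY) (px : XX) (py : YY)

/-- The core combinatorial lemma: any balanced disjointly-supported nonzero pair of
edge multisets contains a balanced nonzero subpair which is squarefree and has degree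
at most one at the distinguished "phantom" vertices `px`, `py`. -/
lemma corewalk :
    ∀ (N : ℕ) (γ δ : Finsupp EE ℕ), sumN γ + sumN δ ≤ N →
      (∀ x, degA epX γ x = degA epX δ x) → (∀ y, degA epY γ y = degA epY δ y) → γ ≠ 0 →
      ∃ C D : Finsupp EE ℕ, C ≤ γ ∧ D ≤ δ ∧ C ≠ 0 ∧
        (∀ x, degA epX C x = degA epX D x) ∧ (∀ y, degA epY C y = degA epY D y) ∧
        (∀ e, C e ≤ 1) ∧ (∀ e, D e ≤ 1) ∧
        degA epX C px ≤ 1 ∧ degA epY C py ≤ 1 ∧ degA epX D px ≤ 1 ∧ degA epY D py ≤ 1 := by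
  intro N
  induction N with
  | zero =>
    intro γ δ hN hbX hbY hγ
    exfalso
    have : sumN γ = 0 := by omega
    exact hγ (sumN_eq_zero this)
  | succ N ih =>
    intro γ δ hN hbX hbY hγ
    -- helper to recurse on a strictly smaller balanced nonzero subpair
    have recur : ∀ c d : Finsupp EE ℕ, c ≤ γ → d ≤ δ → c ≠ 0 →
        (∀ x, degA epX c x = degA epX d x) → (∀ y, degA epY c y = degA epY d y) →
        sumN c + sumN d < sumN γ + sumN δ →
        ∃ C D : Finsupp EE ℕ, C ≤ γ ∧ D ≤ δ ∧ C ≠ 0 ∧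
          (∀ x, degA epX C x = degA epX D x) ∧ (∀ y, degA epY C y = degA epY D y) ∧
          (∀ e, C e ≤ 1) ∧ (∀ e, D e ≤ 1) ∧
          degA epX C px ≤ 1 ∧ degA epY C py ≤ 1 ∧ degA epX D px ≤ 1 ∧ degA epY D py ≤ 1 := by
      intro c d hcγ hdδ hc0 hbX' hbY' hlt
      obtain ⟨C, D, h1, h2, h3, h4, h5, h6, h7, h8, h9, h10, h11⟩ :=
        ih c d (by omega) hbX' hbY' hc0
      exact ⟨C, D, le_trans h1 hcγ, le_trans h2 hdδ, h3, h4, h5, h6, h7, h8, h9, h10, h11⟩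
    by_cases h1 : ∃ e, 2 ≤ γ e
    · obtain ⟨e, he⟩ := h1
      obtain ⟨C, D, hCγ, hDδ, hC0, hbX', hbY', hCe, _⟩ :=
        twalk (epX := epX) (epY := epY) γ δ hbX hbY e (by omega)
      refine recur C D hCγ hDδ hC0 hbX' hbY' ?_
      have hne : C ≠ γ := by
        intro h
        rw [h] at hCe
        omega
      have := sumN_lt_of_ne hCγ hne
      have := sumN_mono hDδ
      omega
    by_cases h2 : ∃ e, 2 ≤ δ e
    · obtain ⟨e, he⟩ := h2
      obtain ⟨C, D, hCδ, hDγ, hC0, hbX', hbY', hCe, _⟩ :=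
        twalk  (epX := epX) (epY := epY) δ γ (fun x => (hbX x).symm) (fun y => (hbY y).symm)
          e (by omega)
      have hD0 : D ≠ 0 := nonzero_of_balanced hbX' hC0
      refine recur D C hDγ hCδ hD0 (fun x => (hbX' x).symm) (fun y => (hbY' y).symm) ?_
      have hne : C ≠ δ := by
        intro h
        rw [h] at hCe
        omega
      have := sumN_lt_of_ne hCδ hne
      have := sumN_mono hDγ
      omega
    push_neg at h1 h2
    by_cases h3 : 2 ≤ degA epX γ px
    · rcases two_of_degA epX γ px h3 with ⟨e, _, he2⟩ | ⟨e, e', hee', hepx, hepx', he0, he0'⟩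
      · exact absurd he2 (by have := h1 e; omega)
      · obtain ⟨C, D, hCγ, hDδ, hC0, hbY', hbX', hCe, hCj⟩ :=
          twalk (epX := epY) (epY := epX) γ δ hbY hbX e he0
        refine recur C D hCγ hDδ hC0 hbX' hbY' ?_
        have hne : C ≠ γ := by
          intro h
          have := hCj e' (Ne.symm hee') (hepx'.trans hepx.symm)
          rw [h] at this
          omega
        have := sumN_lt_of_ne hCγ hne
        have := sumN_mono hDδ
        omega
    by_cases h4 : 2 ≤ degA epY γ py
    · rcases two_of_degA epY γ py h4 with ⟨e, _, he2⟩ | ⟨e, e', hee', hepy, hepy', he0, he0'⟩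
      · exact absurd he2 (by have := h1 e; omega)
      · obtain ⟨C, D, hCγ, hDδ, hC0, hbX', hbY', hCe, hCj⟩ :=
          twalk (epX := epX) (epY := epY) γ δ hbX hbY e he0
        refine recur C D hCγ hDδ hC0 hbX' hbY' ?_
        have hne : C ≠ γ := by
          intro h
          have := hCj e' (Ne.symm hee') (hepy'.trans hepy.symm)
          rw [h] at this
          omega
        have := sumN_lt_of_ne hCγ hne
        have := sumN_mono hDδ
        omega
    by_cases h5 : 2 ≤ degA epX δ px
    · rcases two_of_degA epX δ px h5 with ⟨e, _, he2⟩ | ⟨e, e', hee', hepx, hepx', he0, he0'⟩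
      · exact absurd he2 (by have := h2 e; omega)
      · obtain ⟨C, D, hCδ, hDγ, hC0, hbY', hbX', hCe, hCj⟩ :=
          twalk (epX := epY) (epY := epX) δ γ (fun y => (hbY y).symm) (fun x => (hbX x).symm)
            e he0
        have hD0 : D ≠ 0 := nonzero_of_balanced hbX' hC0
        refine recur D C hDγ hCδ hD0 (fun x => (hbX' x).symm) (fun y => (hbY' y).symm) ?_
        have hne : C ≠ δ := by
          intro h
          have := hCj e' (Ne.symm hee') (hepx'.trans hepx.symm)
          rw [h] at this
          omega
        have := sumN_lt_of_ne hCδ hne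
        have := sumN_mono hDγ
        omega
    by_cases h6 : 2 ≤ degA epY δ py
    · rcases two_of_degA epY δ py h6 with ⟨e, _, he2⟩ | ⟨e, e', hee', hepy, hepy', he0, he0'⟩
      · exact absurd he2 (by have := h2 e; omega)
      · obtain ⟨C, D, hCδ, hDγ, hC0, hbX', hbY', hCe, hCj⟩ :=
          twalk (epX := epX) (epY := epY) δ γ (fun x => (hbX x).symm) (fun y => (hbY y).symm)
            e he0
        have hD0 : D ≠ 0 := nonzero_of_balanced hbX' hC0
        refine recur D C hDγ hCδ hD0 (fun x => (hbX' x).symm) (fun y => (hbY' y).symm) ?_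
        have hne : C ≠ δ := by
          intro h
          have := hCj e' (Ne.symm hee') (hepy'.trans hepy.symm)
          rw [h] at this
          omega
        have := sumN_lt_of_ne hCδ hne
        have := sumN_mono hDγ
        omega
    push_neg at h3 h4 h5 h6
    exact ⟨γ, δ, le_refl γ, le_refl δ, hγ, hbX, hbY,
      fun e => by have := h1 e; omega, fun e => by have := h2 e; omega,
      by omega, by omega, by omega, by omega⟩

end Core

end ReesWalk

set_option linter.unusedSectionVars false

namespace ReesProof

open MvPolynomial ReesWalk

variable {k : Type*} [Field k] {n m q : ℕ}

/-- exponent vector of the image of a variable under `ψ` -/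
noncomputable def expMap (edge : Fin q → Fin n × Fin m)
    (v : Sum (Sum (Fin n) (Fin m)) (Fin q)) : Sum (Sum (Fin n) (Fin m)) Unit →₀ ℕ :=
  match v with
  | .inl v => Finsupp.single (.inl v) 1
  | .inr e => Finsupp.single (.inl (.inl (edge e).1)) 1
      + Finsupp.single (.inl (.inr (edge e).2)) 1 + Finsupp.single (.inr ()) 1

/-- exponent map on monomials induced by `ψ` -/
noncomputable def Phi (edge : Fin q → Fin n × Fin m)
    (γ : Sum (Sum (Fin n) (Fin m)) (Fin q) →₀ ℕ) : Sum (Sum (Fin n) (Fin m)) Unit →₀ ℕ :=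
  γ.sum fun v c => c • expMap edge v

def epX (edge : Fin q → Fin n × Fin m) : Sum (Sum (Fin n) (Fin m)) (Fin q) → Option (Fin n)
  | .inl (.inl i) => some i
  | .inl (.inr _) => none
  | .inr e => some (edge e).1

def epY (edge : Fin q → Fin n × Fin m) : Sum (Sum (Fin n) (Fin m)) (Fin q) → Option (Fin m)
  | .inl (.inl _) => none
  | .inl (.inr j) => some j
  | .inr e => some (edge e).2

variable (edge : Fin q → Fin n × Fin m)

lemma Phi_add (γ δ : Sum (Sum (Fin n) (Fin m)) (Fin q) →₀ ℕ) :
    Phi edge (γ + δ) = Phi edge γ + Phi edge δ :=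
  Finsupp.sum_add_index' (fun v => zero_smul _ _) (fun v c₁ c₂ => add_smul _ _ _)

lemma X_eq {σ : Type*} (s : σ) : (X s : MvPolynomial σ k) = monomial (Finsupp.single s 1) 1 := rfl

lemma psi_monomial (γ : Sum (Sum (Fin n) (Fin m)) (Fin q) →₀ ℕ) (a : k) :
    reesPsi k n m edge (monomial γ a) = monomial (Phi edge γ) a := by
  rw [reesPsi, aeval_monomial, Phi, monomial_finsupp_sum_index]
  rw [MvPolynomial.algebraMap_eq]
  congr 1
  apply Finsupp.prod_congr
  intro v _
  cases v with
  | inl v' =>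
    show (X (Sum.inl v') : MvPolynomial _ k) ^ γ (Sum.inl v')
      = monomial (γ (Sum.inl v') • expMap edge (Sum.inl v')) 1
    rw [X_eq, monomial_pow, one_pow]
    rfl
  | inr e =>
    dsimp only
    rw [X_eq, X_eq, X_eq, monomial_mul, monomial_mul, monomial_pow]
    norm_num
    simp [expMap, smul_add, Finsupp.smul_single, smul_eq_mul]

lemma expMap_coordX (v : Sum (Sum (Fin n) (Fin m)) (Fin q)) (i : Fin n) :
    expMap edge v (.inl (.inl i)) = if epX edge v = some i then 1 else 0 := by
  rcases v with (i' | j') | e <;>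
    simp [expMap, epX, Finsupp.single_apply]

lemma expMap_coordY (v : Sum (Sum (Fin n) (Fin m)) (Fin q)) (j : Fin m) :
    expMap edge v (.inl (.inr j)) = if epY edge v = some j then 1 else 0 := by
  rcases v with (i' | j') | e <;>
    simp [expMap, epY, Finsupp.single_apply]

lemma expMap_coordT (v : Sum (Sum (Fin n) (Fin m)) (Fin q)) :
    expMap edge v (.inr ()) = match v with | .inl _ => 0 | .inr _ => 1 := by
  rcases v with (i' | j') | e <;> simp [expMap, Finsupp.single_apply]

lemma Phi_coordX (γ : Sum (Sum (Fin n) (Fin m)) (Fin q) →₀ ℕ) (i : Fin n) :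
    Phi edge γ (.inl (.inl i)) = degA (epX edge) γ (some i) := by
  rw [Phi, Finsupp.sum_apply, degA]
  apply Finsupp.sum_congr
  intro v _
  rw [Finsupp.smul_apply, expMap_coordX, smul_eq_mul, mul_ite, mul_one, mul_zero]

lemma Phi_coordY (γ : Sum (Sum (Fin n) (Fin m)) (Fin q) →₀ ℕ) (j : Fin m) :
    Phi edge γ (.inl (.inr j)) = degA (epY edge) γ (some j) := by
  rw [Phi, Finsupp.sum_apply, degA]
  apply Finsupp.sum_congr
  intro v _
  rw [Finsupp.smul_apply, expMap_coordY, smul_eq_mul, mul_ite, mul_one, mul_zero]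

lemma Phi_coordT (γ : Sum (Sum (Fin n) (Fin m)) (Fin q) →₀ ℕ) :
    Phi edge γ (.inr ()) = ∑ e : Fin q, γ (.inr e) := by
  rw [Phi, Finsupp.sum_apply]
  rw [Finsupp.sum_fintype _ _ (fun v => by simp)]
  rw [Fintype.sum_sum_type]
  have h1 : (∑ v : Sum (Fin n) (Fin m),
      (γ (Sum.inl v) • expMap edge (Sum.inl v)) (Sum.inr ())) = 0 := by
    apply Finset.sum_eq_zero
    intro v _
    rw [Finsupp.smul_apply, expMap_coordT]
    simp
  rw [h1, zero_add]
  apply Finset.sum_congr rfl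
  intro e _
  rw [Finsupp.smul_apply, expMap_coordT]
  simp

lemma degXnone (γ : Sum (Sum (Fin n) (Fin m)) (Fin q) →₀ ℕ) :
    degA (epX edge) γ none = ∑ j : Fin m, γ (.inl (.inr j)) := by
  rw [degA, Finsupp.sum_fintype _ _ (fun v => by simp)]
  rw [Fintype.sum_sum_type, Fintype.sum_sum_type]
  simp [epX]

lemma degYnone (γ : Sum (Sum (Fin n) (Fin m)) (Fin q) →₀ ℕ) :
    degA (epY edge) γ none = ∑ i : Fin n, γ (.inl (.inl i)) := by
  rw [degA, Finsupp.sum_fintype _ _ (fun v => by simp)]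
  rw [Fintype.sum_sum_type, Fintype.sum_sum_type]
  simp [epY]

lemma sum_degX (γ : Sum (Sum (Fin n) (Fin m)) (Fin q) →₀ ℕ) :
    ∑ i : Fin n, degA (epX edge) γ (some i)
      = (∑ i : Fin n, γ (.inl (.inl i))) + ∑ e : Fin q, γ (.inr e) := by
  have h : ∀ i : Fin n, degA (epX edge) γ (some i)
      = ∑ v : Sum (Sum (Fin n) (Fin m)) (Fin q), if epX edge v = some i then γ v else 0 := by
    intro i
    rw [degA, Finsupp.sum_fintype _ _ (fun v => by simp)]
  simp only [h]
  rw [Finset.sum_comm]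
  rw [Fintype.sum_sum_type, Fintype.sum_sum_type]
  have h1 : ∀ i' : Fin n, (∑ i : Fin n,
      if epX edge (Sum.inl (Sum.inl i')) = some i then γ (Sum.inl (Sum.inl i')) else 0)
      = γ (.inl (.inl i')) := by
    intro i'
    simp [epX, Finset.sum_ite_eq]
  have h2 : ∀ j' : Fin m, (∑ i : Fin n,
      if epX edge (Sum.inl (Sum.inr j')) = some i then γ (Sum.inl (Sum.inr j')) else 0) = 0 := by
    intro j'
    simp [epX]
  have h3 : ∀ e : Fin q, (∑ i : Fin n,
      if epX edge (Sum.inr e) = some i then γ (Sum.inr e) else 0) = γ (.inr e) := by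
    intro e
    simp [epX, Finset.sum_ite_eq]
  rw [Finset.sum_congr rfl fun i' _ => h1 i', Finset.sum_congr rfl fun j' _ => h2 j',
    Finset.sum_congr rfl fun e _ => h3 e]
  simp

lemma sum_degY (γ : Sum (Sum (Fin n) (Fin m)) (Fin q) →₀ ℕ) :
    ∑ j : Fin m, degA (epY edge) γ (some j)
      = (∑ j : Fin m, γ (.inl (.inr j))) + ∑ e : Fin q, γ (.inr e) := by
  have h : ∀ j : Fin m, degA (epY edge) γ (some j)
      = ∑ v : Sum (Sum (Fin n) (Fin m)) (Fin q), if epY edge v = some j then γ v else 0 := by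
    intro j
    rw [degA, Finsupp.sum_fintype _ _ (fun v => by simp)]
  simp only [h]
  rw [Finset.sum_comm]
  rw [Fintype.sum_sum_type, Fintype.sum_sum_type]
  have h1 : ∀ i' : Fin n, (∑ j : Fin m,
      if epY edge (Sum.inl (Sum.inl i')) = some j then γ (Sum.inl (Sum.inl i')) else 0) = 0 := by
    intro i'
    simp [epY]
  have h2 : ∀ j' : Fin m, (∑ j : Fin m,
      if epY edge (Sum.inl (Sum.inr j')) = some j then γ (Sum.inl (Sum.inr j')) else 0)
      = γ (.inl (.inr j')) := by
    intro j'
    simp [epY, Finset.sum_ite_eq]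
  have h3 : ∀ e : Fin q, (∑ j : Fin m,
      if epY edge (Sum.inr e) = some j then γ (Sum.inr e) else 0) = γ (.inr e) := by
    intro e
    simp [epY, Finset.sum_ite_eq]
  rw [Finset.sum_congr rfl fun i' _ => h1 i', Finset.sum_congr rfl fun j' _ => h2 j',
    Finset.sum_congr rfl fun e _ => h3 e]
  simp

lemma balance_of_phi {γ δ : Sum (Sum (Fin n) (Fin m)) (Fin q) →₀ ℕ}
    (h : Phi edge γ = Phi edge δ) :
    (∀ x, degA (epX edge) γ x = degA (epX edge) δ x) ∧
    (∀ y, degA (epY edge) γ y = degA (epY edge) δ y) := by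
  have hT : (∑ e : Fin q, γ (.inr e)) = ∑ e : Fin q, δ (.inr e) := by
    rw [← Phi_coordT edge γ, ← Phi_coordT edge δ, h]
  have hX : ∀ i : Fin n, degA (epX edge) γ (some i) = degA (epX edge) δ (some i) := by
    intro i
    rw [← Phi_coordX, ← Phi_coordX, h]
  have hY : ∀ j : Fin m, degA (epY edge) γ (some j) = degA (epY edge) δ (some j) := by
    intro j
    rw [← Phi_coordY, ← Phi_coordY, h]
  constructor
  · intro x
    cases x with
    | some i => exact hX i
    | none =>
      rw [degXnone, degXnone]
      have e1 := sum_degY edge γ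
      have e2 := sum_degY edge δ
      have e3 : (∑ j : Fin m, degA (epY edge) γ (some j))
          = ∑ j : Fin m, degA (epY edge) δ (some j) :=
        Finset.sum_congr rfl fun j _ => hY j
      omega
  · intro y
    cases y with
    | some j => exact hY j
    | none =>
      rw [degYnone, degYnone]
      have e1 := sum_degX edge γ
      have e2 := sum_degX edge δ
      have e3 : (∑ i : Fin n, degA (epX edge) γ (some i))
          = ∑ i : Fin n, degA (epX edge) δ (some i) :=
        Finset.sum_congr rfl fun i _ => hX i
      omega

lemma phi_of_balance {γ δ : Sum (Sum (Fin n) (Fin m)) (Fin q) →₀ ℕ}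
    (hX : ∀ x, degA (epX edge) γ x = degA (epX edge) δ x)
    (hY : ∀ y, degA (epY edge) γ y = degA (epY edge) δ y) :
    Phi edge γ = Phi edge δ := by
  ext w
  rcases w with (i | j) | u
  · rw [Phi_coordX, Phi_coordX, hX (some i)]
  · rw [Phi_coordY, Phi_coordY, hY (some j)]
  · cases u
    rw [Phi_coordT, Phi_coordT]
    have e1 := sum_degY edge γ
    have e2 := sum_degY edge δ
    have e3 : (∑ j : Fin m, degA (epY edge) γ (some j))
        = ∑ j : Fin m, degA (epY edge) δ (some j) :=
      Finset.sum_congr rfl fun j _ => hY (some j)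
    have e4 := hX none
    rw [degXnone, degXnone] at e4
    omega

lemma Phi_zero : Phi edge 0 = 0 := by
  rw [Phi, Finsupp.sum_zero_index]

lemma eq_zero_of_phi_eq_zero {δ : Sum (Sum (Fin n) (Fin m)) (Fin q) →₀ ℕ}
    (h : Phi edge δ = 0) : δ = 0 := by
  have hb := balance_of_phi edge (h.trans (Phi_zero edge).symm)
  apply Finsupp.ext
  intro v
  have h1 : degA (epX edge) δ (epX edge v) = 0 := by
    rw [(hb.1 (epX edge v))]
    simp [degA]
  have := apply_le_degA (epX edge) δ v
  simp only [Finsupp.coe_zero, Pi.zero_apply]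
  omega

end ReesProof

set_option linter.unusedSectionVars false

namespace ReesProof

open MvPolynomial ReesWalk

/-- The generating set: all binomials in the kernel whose two monomials are squarefree
with degree at most one in the `x`-variables and in the `y`-variables. -/
def BSet (k : Type*) [Field k] (n m q : ℕ) (edge : Fin q → Fin n × Fin m) :
    Set (MvPolynomial (Sum (Sum (Fin n) (Fin m)) (Fin q)) k) :=
  {f | reesPsi k n m edge f = 0 ∧ ∃ α β : (Sum (Sum (Fin n) (Fin m)) (Fin q)) →₀ ℕ,
    f = monomial α 1 - monomial β 1 ∧
    (∀ s, α s ≤ 1) ∧ (∀ s, β s ≤ 1) ∧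
    (∑ i : Fin n, α (Sum.inl (Sum.inl i))) ≤ 1 ∧
    (∑ j : Fin m, α (Sum.inl (Sum.inr j))) ≤ 1 ∧
    (∑ i : Fin n, β (Sum.inl (Sum.inl i))) ≤ 1 ∧
    (∑ j : Fin m, β (Sum.inl (Sum.inr j))) ≤ 1}

variable {k : Type*} [Field k] {n m q : ℕ} (edge : Fin q → Fin n × Fin m)

lemma span_le_ker :
    Ideal.span (BSet k n m q edge) ≤ RingHom.ker (reesPsi k n m edge) := by
  rw [Ideal.span_le]
  intro f hf
  rw [SetLike.mem_coe, RingHom.mem_ker]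
  exact hf.1

/-- Any fiber binomial lies in the span of the constrained binomials. -/
lemma lemB : ∀ (N : ℕ) (γ δ : (Sum (Sum (Fin n) (Fin m)) (Fin q)) →₀ ℕ),
    sumN γ + sumN δ ≤ N → Phi edge γ = Phi edge δ →
    (monomial γ 1 - monomial δ 1 : MvPolynomial _ k) ∈ Ideal.span (BSet k n m q edge) := by
  intro N
  induction N with
  | zero =>
    intro γ δ hN hp
    have hγ : γ = 0 := sumN_eq_zero (by omega)
    have hδ : δ = 0 := sumN_eq_zero (by omega)
    rw [hγ, hδ, sub_self]
    exact Ideal.zero_mem _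
  | succ N ih =>
    intro γ δ hN hp
    by_cases hγ0 : γ = 0
    · have hδ0 : δ = 0 := eq_zero_of_phi_eq_zero edge (by rw [← hp, hγ0, Phi_zero])
      rw [hγ0, hδ0, sub_self]
      exact Ideal.zero_mem _
    · have hb := balance_of_phi edge hp
      obtain ⟨C, D, hCγ, hDδ, hC0, hbX, hbY, hCsf, hDsf, hdg1, hdg2, hdg3, hdg4⟩ :=
        corewalk (epX edge) (epY edge) none none (sumN γ + sumN δ) γ δ le_rfl hb.1 hb.2 hγ0
      have hPhiCD : Phi edge C = Phi edge D := phi_of_balance edge hbX hbY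
      set γ₂ := γ - C with hγ₂
      set δ₂ := δ - D with hδ₂
      have hγsplit : C + γ₂ = γ := add_tsub_cancel_of_le hCγ
      have hδsplit : D + δ₂ = δ := add_tsub_cancel_of_le hDδ
      have hPhi2 : Phi edge γ₂ = Phi edge δ₂ := by
        have e1 : Phi edge C + Phi edge γ₂ = Phi edge D + Phi edge δ₂ := by
          rw [← Phi_add, ← Phi_add, hγsplit, hδsplit]
          exact hp
        rw [hPhiCD] at e1
        exact add_left_cancel e1
      have hmem1 : (monomial C 1 - monomial D 1 : MvPolynomial _ k) ∈ BSet k n m q edge := by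
        constructor
        · rw [map_sub, psi_monomial, psi_monomial, hPhiCD, sub_self]
        · refine ⟨C, D, rfl, hCsf, hDsf, ?_, ?_, ?_, ?_⟩
          · rw [← degYnone edge C]; exact hdg2
          · rw [← degXnone edge C]; exact hdg1
          · rw [← degYnone edge D]; exact hdg4
          · rw [← degXnone edge D]; exact hdg3
      have hsC : sumN C + sumN γ₂ = sumN γ := by rw [← sumN_add, hγsplit]
      have hsD : sumN D + sumN δ₂ = sumN δ := by rw [← sumN_add, hδsplit]
      have hC1 : 1 ≤ sumN C := Nat.one_le_iff_ne_zero.mpr (fun h => hC0 (sumN_eq_zero h))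
      have hmem2 := ih γ₂ δ₂ (by omega) hPhi2
      have hiden : (monomial γ 1 - monomial δ 1 : MvPolynomial _ k)
          = monomial γ₂ 1 * (monomial C 1 - monomial D 1)
            + (monomial γ₂ 1 - monomial δ₂ 1) * monomial D 1 := by
        rw [← hγsplit, ← hδsplit]
        rw [show (monomial (C + γ₂) (1 : k)) = monomial C 1 * monomial γ₂ 1 from by
          rw [monomial_mul, one_mul]]
        rw [show (monomial (D + δ₂) (1 : k)) = monomial D 1 * monomial δ₂ 1 from by
          rw [monomial_mul, one_mul]]
        ring
      rw [hiden]
      exact Ideal.add_mem _ (Ideal.mul_mem_left _ _ (Ideal.subset_span hmem1))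
        (Ideal.mul_mem_right _ _ hmem2)

/-- Every element of the kernel lies in the span of the constrained binomials. -/
lemma lemA : ∀ (M : ℕ) (f : MvPolynomial (Sum (Sum (Fin n) (Fin m)) (Fin q)) k),
    f.support.card ≤ M → reesPsi k n m edge f = 0 →
    f ∈ Ideal.span (BSet k n m q edge) := by
  intro M
  induction M with
  | zero =>
    intro f hcard _
    have h1 : f.support = ∅ := Finset.card_eq_zero.mp (Nat.le_zero.mp hcard)
    rw [support_eq_empty.mp h1]
    exact Ideal.zero_mem _
  | succ M ih =>
    intro f hcard hker
    by_cases hf0 : f = 0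
    · rw [hf0]
      exact Ideal.zero_mem _
    · classical
      obtain ⟨α, hα⟩ : ∃ α, α ∈ f.support :=
        Finset.nonempty_iff_ne_empty.mpr (fun h => hf0 (support_eq_empty.mp h))
      set F := f.support.filter (fun β => Phi edge β = Phi edge α) with hF
      have hαF : α ∈ F := Finset.mem_filter.mpr ⟨hα, rfl⟩
      have hsum0 : (∑ β ∈ F, coeff β f) = 0 := by
        have hexp : reesPsi k n m edge f
            = ∑ β ∈ f.support, monomial (Phi edge β) (coeff β f) := by
          conv_lhs => rw [f.as_sum]
          rw [map_sum]
          exact Finset.sum_congr rfl fun β _ => psi_monomial edge β _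
        have h2 := congrArg (coeff (Phi edge α)) (hexp.symm.trans hker)
        rw [coeff_sum, coeff_zero] at h2
        rw [hF, Finset.sum_filter]
        rw [Finset.sum_congr rfl (fun β _ => by rw [coeff_monomial])] at h2
        exact h2
      set g := ∑ β ∈ F, C (coeff β f) * (monomial β 1 - monomial α 1)
        with hg
      have hgmem : g ∈ Ideal.span (BSet k n m q edge) :=
        Ideal.sum_mem _ fun β hβ => Ideal.mul_mem_left _ _
          (lemB edge (sumN β + sumN α) β α le_rfl (Finset.mem_filter.mp hβ).2)
      have hgker : reesPsi k n m edge g = 0 := by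
        have := span_le_ker edge hgmem
        rwa [RingHom.mem_ker] at this
      have hgeq : g = ∑ β ∈ F, monomial β (coeff β f) := by
        rw [hg]
        have hterm : ∀ β ∈ F, C (coeff β f) * ((monomial β) (1:k) - (monomial α) 1)
            = monomial β (coeff β f) - monomial α (coeff β f) := by
          intro β _
          rw [mul_sub, C_mul_monomial, C_mul_monomial, mul_one]
        rw [Finset.sum_congr rfl hterm, Finset.sum_sub_distrib]
        have h3 : (∑ β ∈ F, monomial α (coeff β f))
            = monomial α (∑ β ∈ F, coeff β f) := (map_sum (monomial α) _ _).symm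
        rw [h3, hsum0]
        simp
      have hcoeff : ∀ γ0, coeff γ0 (f - g) = if γ0 ∈ F then 0 else coeff γ0 f := by
        intro γ0
        rw [coeff_sub, hgeq, coeff_sum]
        rw [Finset.sum_congr rfl (fun β _ => by rw [coeff_monomial])]
        rw [Finset.sum_ite_eq' F γ0 (fun β => coeff β f)]
        split_ifs <;> ring
      have hsupp : (f - g).support ⊆ f.support.erase α := by
        intro γ0 hmem
        rw [MvPolynomial.mem_support_iff] at hmem
        rw [hcoeff γ0] at hmem
        by_cases hγ0F : γ0 ∈ F
        · rw [if_pos hγ0F] at hmem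
          exact absurd rfl hmem
        · rw [if_neg hγ0F] at hmem
          refine Finset.mem_erase.mpr ⟨?_, MvPolynomial.mem_support_iff.mpr hmem⟩
          intro h
          rw [h] at hγ0F
          exact hγ0F hαF
      have hcard' : (f - g).support.card ≤ M := by
        have h4 := Finset.card_le_card hsupp
        have h5 := Finset.card_erase_of_mem hα
        omega
      have hker' : reesPsi k n m edge (f - g) = 0 := by
        rw [map_sub, hker, hgker, sub_zero]
      have hmem3 := ih (f - g) hcard' hker'
      have h6 : f = (f - g) + g := by ring
      rw [h6]
      exact Ideal.add_mem _ hmem3 hgmem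

end ReesProof


/-- The defining ideal `𝒬 = ker ψ` of the Rees algebra of the edge ideal
of a bipartite graph `G` is generated by binomials `m₁ − m₂` in which both monomials are
squarefree and have degree at most `1` in the `x`-variables and degree at most `1` in the
`y`-variables. -/
theorem ker_reesPsi_generated_by_squarefree_binomials (k : Type*) [Field k] (n m q : ℕ)
    (edge : Fin q → Fin n × Fin m) (hedge : Function.Injective edge) :
    ∃ B : Set (MvPolynomial (Sum (Sum (Fin n) (Fin m)) (Fin q)) k),
      (∀ f ∈ B, ∃ α β : (Sum (Sum (Fin n) (Fin m)) (Fin q)) →₀ ℕ,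
        f = monomial α 1 - monomial β 1 ∧
        (∀ s, α s ≤ 1) ∧ (∀ s, β s ≤ 1) ∧
        (∑ i : Fin n, α (Sum.inl (Sum.inl i))) ≤ 1 ∧
        (∑ j : Fin m, α (Sum.inl (Sum.inr j))) ≤ 1 ∧
        (∑ i : Fin n, β (Sum.inl (Sum.inl i))) ≤ 1 ∧
        (∑ j : Fin m, β (Sum.inl (Sum.inr j))) ≤ 1) ∧
      RingHom.ker (reesPsi k n m edge) = Ideal.span B := by
  classical
  refine ⟨ReesProof.BSet k n m q edge, ?_, ?_⟩
  · intro f hf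
    exact hf.2
  · apply le_antisymm
    · intro f hf
      have h0 : reesPsi k n m edge f = 0 := by rwa [RingHom.mem_ker] at hf
      exact ReesProof.lemA edge f.support.card f le_rfl h0
    · exact ReesProof.span_le_ker edge
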